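/- For any nonempty compact set A ⊆ ℝ^d, the upper outer box dimension of A is at most the upper outer Minkowski dimension of A, and the lower outer box dimension is at most the lower outer Minkowski dimension. -/

import Mathlib

open Metric MeasureTheory Filter Set Topology
open scoped ENNReal

noncomputable section

/-- `uniqueNearest A y x` : `x` is the unique nearest point of `y` in `A`. -/
def uniqueNearest {d : ℕ} (A : Set (EuclideanSpace ℝ (Fin d)))
    (y x : EuclideanSpace ℝ (Fin d)) : Prop :=
  x ∈ A ∧ dist y x = Metric.infDist y A ∧ ∀ a ∈ A, dist y a = Metric.infDist y A → a = x

/-- The local reach `δ(A,x,u)`. -/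
def localReach {d : ℕ} (A : Set (EuclideanSpace ℝ (Fin d)))
    (x u : EuclideanSpace ℝ (Fin d)) : ℝ≥0∞ :=
  ⨆ (s : ℝ) (_ : 0 ≤ s ∧ uniqueNearest A (x + s • u) x), ENNReal.ofReal s

/-- `M_t(A)`. -/
def reachSet {d : ℕ} (A : Set (EuclideanSpace ℝ (Fin d))) (t : ℝ) :
    Set (EuclideanSpace ℝ (Fin d)) :=
  {x | x ∈ frontier A ∧ ∃ u : EuclideanSpace ℝ (Fin d), ‖u‖ = 1 ∧
    ENNReal.ofReal t < localReach A x u}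

/-- `Θ_t`: minimal number of open sets of diameter at most `t` needed to cover `S`. -/
def coverNum {d : ℕ} (S : Set (EuclideanSpace ℝ (Fin d))) (t : ℝ) : ℕ :=
  sInf {n | ∃ 𝒰 : Finset (Set (EuclideanSpace ℝ (Fin d))), 𝒰.card = n ∧
    (∀ U ∈ 𝒰, IsOpen U ∧ Metric.diam U ≤ t) ∧ S ⊆ ⋃₀ ↑𝒰}

/-- Upper outer Minkowski dimension. -/
def dimOutMinkUpper {d : ℕ} (A : Set (EuclideanSpace ℝ (Fin d))) : ℝ :=
  sInf {q : ℝ | 0 ≤ q ∧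
    Filter.limsup (fun ε : ℝ =>
      ENNReal.ofReal (ε ^ (q - (d : ℝ))) * volume (Metric.cthickening ε A \ A))
      (𝓝[>] 0) = 0}

/-- Lower outer Minkowski dimension. -/
def dimOutMinkLower {d : ℕ} (A : Set (EuclideanSpace ℝ (Fin d))) : ℝ :=
  sInf {q : ℝ | 0 ≤ q ∧
    Filter.liminf (fun ε : ℝ =>
      ENNReal.ofReal (ε ^ (q - (d : ℝ))) * volume (Metric.cthickening ε A \ A))
      (𝓝[>] 0) = 0}

lemma exists_net {E : Type*} [MetricSpace E] {S : Set E} (hS : TotallyBounded S) {r : ℝ}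
    (hr : 0 < r) :
    ∃ X : Finset E, ↑X ⊆ S ∧ (↑X : Set E).Pairwise (fun x y => r ≤ dist x y) ∧
      S ⊆ ⋃ x ∈ X, ball x r := by
  classical
  obtain ⟨T, hTfin, hTcov⟩ := totallyBounded_iff.mp hS (r / 2) (by positivity)
  set 𝒞 : Set (Finset E) :=
    {X | ↑X ⊆ S ∧ (↑X : Set E).Pairwise (fun x y => r ≤ dist x y)} with h𝒞
  have hcard : ∀ X ∈ 𝒞, X.card ≤ hTfin.toFinset.card := by
    intro X hX
    have hex : ∀ x ∈ X, ∃ c ∈ T, dist x c < r / 2 := by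
      intro x hx
      have := hTcov (hX.1 hx)
      simpa [mem_ball] using this
    set f : E → E := fun x => if h : ∃ c ∈ T, dist x c < r / 2 then h.choose else x with hf
    have hfmem : ∀ x ∈ X, f x ∈ T ∧ dist x (f x) < r / 2 := by
      intro x hx
      have h := hex x hx
      simp only [hf, dif_pos h]
      exact ⟨h.choose_spec.1, h.choose_spec.2⟩
    apply Finset.card_le_card_of_injOn f
    · intro x hx
      simpa using (hfmem x hx).1
    · intro x hx y hy hxy
      by_contra hne
      have := hX.2 (by exact_mod_cast hx) (by exact_mod_cast hy) hne
      have : r ≤ dist x y := this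
      have h1 := (hfmem x hx).2
      have h2 := (hfmem y hy).2
      have : dist x y ≤ dist x (f x) + dist (f y) y := by
        rw [hxy]; exact dist_triangle _ _ _
      rw [dist_comm (f y) y] at this
      linarith
  have hne𝒞 : 𝒞.Nonempty := ⟨∅, by simp [h𝒞]⟩
  have hbdd : BddAbove (Finset.card '' 𝒞) := ⟨hTfin.toFinset.card, by
    rintro n ⟨X, hX, rfl⟩; exact hcard X hX⟩
  obtain ⟨X, hX𝒞, hXcard⟩ := Nat.sSup_mem (hne𝒞.image Finset.card) hbdd
  refine ⟨X, hX𝒞.1, hX𝒞.2, ?_⟩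
  intro y hy
  by_contra hyc
  simp only [mem_iUnion, mem_ball, not_exists] at hyc
  have hsep : ∀ x ∈ X, r ≤ dist y x := by
    intro x hx
    have := hyc x
    push_neg at this
    exact this hx
  have hyX : y ∉ X := fun h => absurd (hsep y h) (by simp [hr])
  have hins : insert y X ∈ 𝒞 := by
    constructor
    · rw [Finset.coe_insert]
      exact Set.insert_subset hy hX𝒞.1
    · rw [Finset.coe_insert]
      haveI : Std.Symm (fun x y : E => r ≤ dist x y) := ⟨fun a b hab => by rw [dist_comm]; exact hab⟩
      apply hX𝒞.2.insert_of_symm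
      · intro x hx _
        exact hsep x (by exact_mod_cast hx)
  have : (insert y X).card ≤ sSup (Finset.card '' 𝒞) :=
    le_csSup hbdd ⟨_, hins, rfl⟩
  rw [← hXcard, Finset.card_insert_of_notMem hyX] at this
  omega


lemma reachSet_elim {d : ℕ} {A : Set (EuclideanSpace ℝ (Fin d))} {t : ℝ} (ht : 0 < t)
    {x : EuclideanSpace ℝ (Fin d)} (hx : x ∈ reachSet A t) :
    x ∈ A ∧ ∃ u : EuclideanSpace ℝ (Fin d), ‖u‖ = 1 ∧ ∃ s : ℝ, t < s ∧
      ∀ a ∈ A, s ≤ dist (x + s • u) a := by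
  obtain ⟨-, u, hu, hlt⟩ := hx
  rw [localReach, lt_iSup_iff] at hlt
  obtain ⟨s, hs⟩ := hlt
  rw [lt_iSup_iff] at hs
  obtain ⟨⟨hs0, hxA, hdist, -⟩, hts⟩ := hs
  have hts' : t < s := by
    rwa [ENNReal.ofReal_lt_ofReal_iff_of_nonneg ht.le] at hts
  have hnorm : dist (x + s • u) x = s := by
    rw [dist_eq_norm]
    simp [norm_smul, abs_of_nonneg hs0, hu]
  refine ⟨hxA, u, hu, s, hts', fun a ha => ?_⟩
  calc s = Metric.infDist (x + s • u) A := by rw [← hdist, hnorm]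
    _ ≤ dist (x + s • u) a := Metric.infDist_le_dist_of_mem ha

def ballVol (d : ℕ) : ℝ := (volume (ball (0 : EuclideanSpace ℝ (Fin d)) 1)).toReal

def Cst (d : ℕ) : ℝ := max ((200 : ℝ) ^ d / ballVol d) 1

lemma ballVol_pos (d : ℕ) : 0 < ballVol d :=
  ENNReal.toReal_pos (measure_ball_pos volume _ one_pos).ne' measure_ball_lt_top.ne

lemma one_le_Cst (d : ℕ) : 1 ≤ Cst d := le_max_right _ _

lemma Cst_pos (d : ℕ) : 0 < Cst d := lt_of_lt_of_le one_pos (one_le_Cst d)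

lemma counting {d : ℕ} {A : Set (EuclideanSpace ℝ (Fin d))} (hA : IsCompact A)
    (hne : A.Nonempty) {t : ℝ} (ht : 0 < t) :
    (coverNum (reachSet A t) t : ℝ≥0∞) *
      (ENNReal.ofReal ((t / 200) ^ d) * volume (ball (0 : EuclideanSpace ℝ (Fin d)) 1)) ≤
      volume (cthickening t A \ A) := by
  classical
  rcases subsingleton_or_nontrivial (EuclideanSpace ℝ (Fin d)) with hsub | hnt
  · -- trivial space : reachSet is empty, coverNum = 0
    have hAuniv : A = univ := by
      apply eq_univ_of_forall
      intro x
      obtain ⟨a, ha⟩ := hne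
      rwa [Subsingleton.elim x a]
    have hM : reachSet A t = ∅ := by
      rw [eq_empty_iff_forall_notMem]
      intro x hx
      have := hx.1
      rw [hAuniv, frontier_univ] at this
      exact this
    have h0 : coverNum (reachSet A t) t = 0 := by
      apply Nat.sInf_eq_zero.mpr
      left
      exact ⟨∅, by simp [hM]⟩
    simp [h0]
  · set M := reachSet A t with hM
    have hMA : M ⊆ A := by
      intro x hx
      have := hx.1
      have h2 := frontier_subset_closure this
      rwa [hA.isClosed.closure_eq] at h2
    have htb : TotallyBounded M := hA.totallyBounded.subset hMA
    obtain ⟨X, hXM, hXsep, hXcov⟩ := exists_net htb (r := t / 2) (by positivity)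
    -- choose directions
    have key : ∀ x : EuclideanSpace ℝ (Fin d), ∃ p : EuclideanSpace ℝ (Fin d) × ℝ, x ∈ (X : Set (EuclideanSpace ℝ (Fin d))) →
        ‖p.1‖ = 1 ∧ t < p.2 ∧ x ∈ A ∧ ∀ a ∈ A, p.2 ≤ dist (x + p.2 • p.1) a := by
      intro x
      by_cases hx : x ∈ (X : Set (EuclideanSpace ℝ (Fin d)))
      · obtain ⟨hxA, u, hu, s, hts, hball⟩ := reachSet_elim ht (hXM hx)
        exact ⟨(u, s), fun _ => ⟨hu, hts, hxA, hball⟩⟩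
      · exact ⟨(0, 0), fun h => absurd h hx⟩
    choose p hp using key
    set u := fun x => (p x).1 with hu
    set s := fun x => (p x).2 with hs
    set z := fun x => x + (t / 2) • u x with hz
    set ρ : ℝ := t / 200 with hρ
    have hρpos : 0 < ρ := by positivity
    have hdzx : ∀ x ∈ (X : Set (EuclideanSpace ℝ (Fin d))), dist (z x) x = t / 2 := by
      intro x hx
      have hu1 := (hp x hx).1
      rw [hz]
      simp only [dist_eq_norm, add_sub_cancel_left, norm_smul, hu1]
      rw [Real.norm_eq_abs, abs_of_pos (by positivity), show ‖u x‖ = 1 from hu1, mul_one]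
    -- Claim 1 : the small balls sit inside the collar
    have hsubset : ∀ x ∈ (X : Set (EuclideanSpace ℝ (Fin d))),
        ball (z x) ρ ⊆ cthickening t A \ A := by
      intro x hx q hq
      obtain ⟨hu1, hts, hxA, hball⟩ := hp x hx
      have hdqx : dist q x ≤ t := by
        calc dist q x ≤ dist q (z x) + dist (z x) x := dist_triangle _ _ _
          _ ≤ ρ + t / 2 := by
              have := mem_ball.mp hq
              have := hdzx x hx
              linarith [mem_ball.mp hq, le_of_eq (hdzx x hx)]
          _ ≤ t := by rw [hρ]; linarith
      constructor
      · exact closedBall_subset_cthickening hxA t (mem_closedBall.mpr hdqx)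
      · intro hqA
        have h1 : s x ≤ dist (x + s x • u x) q := hball q hqA
        have h2 : dist (x + s x • u x) (z x) = s x - t / 2 := by
          rw [hz]
          simp only [dist_eq_norm]
          have : x + s x • u x - (x + (t / 2) • u x) = (s x - t / 2) • u x := by
            rw [sub_smul]; abel
          rw [this, norm_smul, hu1, Real.norm_eq_abs, abs_of_nonneg (by linarith), mul_one]
        have h3 : dist (x + s x • u x) q ≤ dist (x + s x • u x) (z x) + dist (z x) q := 
          dist_triangle _ _ _
        have h4 : dist (z x) q < ρ := by rw [dist_comm]; exact mem_ball.mp hq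
        rw [h2] at h3
        rw [hρ] at h4
        linarith
    -- key quantitative estimate : a near-point of a doubly-covered point is close to x
    have hclose : ∀ x ∈ (X : Set (EuclideanSpace ℝ (Fin d))),
        ∀ q ∈ ball (z x) ρ, ∀ a ∈ A, dist q a < t / 2 + 2 * ρ → dist a x < t / 4 := by
      intro x hx q hq a haA hqa
      obtain ⟨hu1, hts, hxA, hball⟩ := hp x hx
      set v := a - x with hv
      have h1 : s x ≤ ‖v - s x • u x‖ := by
        have := hball a haA
        rw [dist_eq_norm] at this
        have heq : x + s x • u x - a = -(v - s x • u x) := by rw [hv]; abel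
        rwa [heq, norm_neg] at this
      have h2 : ‖v - (t / 2) • u x‖ < t / 2 + 3 * ρ := by
        have ha3 : dist a (z x) ≤ dist a q + dist q (z x) := dist_triangle _ _ _
        have : dist a (z x) < (t / 2 + 2 * ρ) + ρ := by
          have := mem_ball.mp hq
          rw [dist_comm] at hqa
          linarith
        have heq : a - z x = v - (t / 2) • u x := by rw [hz, hv]; exact sub_add_eq_sub_sub _ _ _
        rw [dist_eq_norm, heq] at this
        linarith
      set i : ℝ := inner ℝ v (u x) with hi
      set n : ℝ := ‖v‖ with hn
      have e1 : ‖v - s x • u x‖ ^ 2 = n ^ 2 - 2 * (s x * i) + s x ^ 2 := by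
        have h := norm_sub_sq_real v (s x • u x)
        rw [real_inner_smul_right, norm_smul, hu1, mul_one, Real.norm_eq_abs, sq_abs] at h
        rw [h, ← hn, ← hi]
      have e2 : ‖v - (t / 2) • u x‖ ^ 2 = n ^ 2 - t * i + (t / 2) ^ 2 := by
        have h := norm_sub_sq_real v ((t / 2) • u x)
        rw [real_inner_smul_right, norm_smul, hu1, mul_one, Real.norm_eq_abs, sq_abs] at h
        rw [h, ← hn, ← hi]
        ring
      have f1 : 2 * (s x * i) ≤ n ^ 2 := by
        have hsq : s x ^ 2 ≤ ‖v - s x • u x‖ ^ 2 := pow_le_pow_left₀ (by linarith) h1 2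
        rw [e1] at hsq
        linarith
      have f2 : n ^ 2 < t * i + 3 * t * ρ + 9 * ρ ^ 2 := by
        have hsq : ‖v - (t / 2) • u x‖ ^ 2 < (t / 2 + 3 * ρ) ^ 2 := by
          have h2' : 0 ≤ ‖v - (t / 2) • u x‖ := norm_nonneg _
          nlinarith
        rw [e2] at hsq
        have hexp : (t / 2 + 3 * ρ) ^ 2 = (t / 2) ^ 2 + 3 * t * ρ + 9 * ρ ^ 2 := by ring
        rw [hexp] at hsq
        linarith
      have hn2 : n ^ 2 < (t / 4) ^ 2 := by
        have hρt : ρ = t / 200 := hρ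
        have c1 : 3 * t * ρ = 3 / 200 * t ^ 2 := by rw [hρt]; ring
        have c2 : 9 * ρ ^ 2 = 9 / 40000 * t ^ 2 := by rw [hρt]; ring
        have c3 : (t / 4) ^ 2 = 1 / 16 * t ^ 2 := by ring
        have ht2 : 0 < t ^ 2 := by positivity
        rcases le_or_gt i 0 with hineg | hipos
        · have hti : t * i ≤ 0 := mul_nonpos_iff.mpr (Or.inl ⟨ht.le, hineg⟩)
          rw [c3]; linarith
        · have h1' : t * i ≤ s x * i := mul_le_mul_of_nonneg_right hts.le hipos.le
          rw [c3]; linarith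
      have hdax : dist a x = n := by rw [dist_eq_norm, ← hv, ← hn]
      have hnn : (0:ℝ) ≤ n := by rw [hn]; exact norm_nonneg v
      rw [hdax]
      by_contra hcon
      push_neg at hcon
      have : (t / 4) ^ 2 ≤ n ^ 2 := pow_le_pow_left₀ (by linarith) hcon 2
      linarith
    -- disjointness of the small balls
    have hdisj : (X : Set (EuclideanSpace ℝ (Fin d))).PairwiseDisjoint
        (fun x => ball (z x) ρ) := by
      intro x hx x' hx' hxx'
      rw [Function.onFun, Set.disjoint_left]
      intro q hq hq'
      have hinf : Metric.infDist q A < t / 2 + 2 * ρ := by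
        apply lt_of_le_of_lt (infDist_le_dist_of_mem (hp x hx).2.2.1)
        calc dist q x ≤ dist q (z x) + dist (z x) x := dist_triangle _ _ _
          _ < ρ + t / 2 := by
              have := mem_ball.mp hq
              have := hdzx x hx
              linarith
          _ < t / 2 + 2 * ρ := by linarith
      obtain ⟨a, haA, hqa⟩ := (infDist_lt_iff hne).mp hinf
      have d1 : dist a x < t / 4 := hclose x hx q hq a haA hqa
      have d2 : dist a x' < t / 4 := hclose x' hx' q hq' a haA hqa
      have hsep := hXsep hx hx' hxx'
      have : dist x x' ≤ dist x a + dist a x' := dist_triangle _ _ _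
      rw [dist_comm x a] at this
      linarith
    -- coverNum is at most the number of net points
    have hcover : coverNum (reachSet A t) t ≤ X.card := by
      have hmem : X.card ∈ {n | ∃ 𝒰 : Finset (Set (EuclideanSpace ℝ (Fin d))),
          𝒰.card = n ∧ (∀ U ∈ 𝒰, IsOpen U ∧ Metric.diam U ≤ t) ∧
          reachSet A t ⊆ ⋃₀ ↑𝒰} → coverNum (reachSet A t) t ≤ X.card :=
        fun h => Nat.sInf_le h
      refine le_trans (Nat.sInf_le ?_) (Finset.card_image_le (f := fun x => ball x (t / 2)))
      refine ⟨X.image (fun x => ball x (t / 2)), rfl, ?_, ?_⟩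
      · intro U hU
        obtain ⟨x, hx, rfl⟩ := Finset.mem_image.mp hU
        refine ⟨isOpen_ball, ?_⟩
        calc Metric.diam (ball x (t / 2)) ≤ 2 * (t / 2) := diam_ball (by linarith)
          _ = t := by ring
      · intro y hy
        have hcv := hXcov hy
        simp only [Set.mem_iUnion] at hcv
        obtain ⟨x, hxX, hball⟩ := hcv
        exact ⟨ball x (t / 2), by rw [Finset.coe_image]; exact ⟨x, hxX, rfl⟩, hball⟩
    -- volume comparison
    have hvol : (X.card : ℝ≥0∞) *
        (ENNReal.ofReal (ρ ^ d) * volume (ball (0 : EuclideanSpace ℝ (Fin d)) 1)) ≤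
        volume (cthickening t A \ A) := by
      have hb : ⋃ x ∈ X, ball (z x) ρ ⊆ cthickening t A \ A := by
        intro q hq
        simp only [Set.mem_iUnion] at hq
        obtain ⟨x, hx, hq⟩ := hq
        exact hsubset x hx hq
      calc (X.card : ℝ≥0∞) *
            (ENNReal.ofReal (ρ ^ d) * volume (ball (0 : EuclideanSpace ℝ (Fin d)) 1))
          = ∑ x ∈ X, volume (ball (z x) ρ) := by
            rw [Finset.sum_congr rfl (fun x _ => Measure.addHaar_ball volume (z x) hρpos.le)]
            rw [Finset.sum_const, nsmul_eq_mul, finrank_euclideanSpace_fin]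
        _ = volume (⋃ x ∈ X, ball (z x) ρ) :=
            (measure_biUnion_finset hdisj (fun x _ => measurableSet_ball)).symm
        _ ≤ volume (cthickening t A \ A) := measure_mono hb
    calc (coverNum (reachSet A t) t : ℝ≥0∞) *
          (ENNReal.ofReal ((t / 200) ^ d) * volume (ball (0 : EuclideanSpace ℝ (Fin d)) 1))
        ≤ (X.card : ℝ≥0∞) *
          (ENNReal.ofReal ((t / 200) ^ d) * volume (ball (0 : EuclideanSpace ℝ (Fin d)) 1)) :=
          mul_le_mul_of_nonneg_right (by exact_mod_cast hcover) zero_le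
      _ ≤ volume (cthickening t A \ A) := hvol

lemma theta_le {d : ℕ} {A : Set (EuclideanSpace ℝ (Fin d))} (hA : IsCompact A)
    (hne : A.Nonempty) {q t : ℝ} (hq : 0 ≤ q) (ht : 0 < t)
    (hsmall : ENNReal.ofReal (t ^ (q - (d : ℝ))) * volume (cthickening t A \ A) < 1) :
    (coverNum (reachSet A t) t : ℝ) ≤ Cst d * t ^ (-q) := by
  set N := coverNum (reachSet A t) t with hN
  set ω := volume (ball (0 : EuclideanSpace ℝ (Fin d)) 1) with hω
  have hωtop : ω ≠ ⊤ := measure_ball_lt_top.ne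
  have h1 : ENNReal.ofReal (t ^ (q - (d : ℝ))) *
      ((N : ℝ≥0∞) * (ENNReal.ofReal ((t / 200) ^ d) * ω)) < 1 :=
    lt_of_le_of_lt (mul_le_mul_of_nonneg_left (counting hA hne ht) zero_le) hsmall
  have htop : ENNReal.ofReal (t ^ (q - (d : ℝ))) *
      ((N : ℝ≥0∞) * (ENNReal.ofReal ((t / 200) ^ d) * ω)) ≠ ⊤ := h1.ne_top
  have h2 : t ^ (q - (d : ℝ)) * ((N : ℝ) * ((t / 200) ^ d * ballVol d)) < 1 := by
    have := (ENNReal.toReal_lt_toReal htop (by norm_num)).mpr h1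
    rwa [ENNReal.toReal_mul, ENNReal.toReal_mul, ENNReal.toReal_mul,
      ENNReal.toReal_ofReal (Real.rpow_nonneg ht.le _),
      ENNReal.toReal_ofReal (by positivity), ENNReal.toReal_natCast,
      ENNReal.toReal_one] at this
  have he : t ^ (q - (d : ℝ)) * ((t / 200) ^ d * ballVol d) =
      t ^ q * (ballVol d / 200 ^ d) := by
    rw [div_pow, ← Real.rpow_natCast t d]
    rw [show t ^ (q - (d : ℝ)) * (t ^ ((d : ℝ)) / 200 ^ d * ballVol d) =
      t ^ (q - (d : ℝ)) * t ^ ((d : ℝ)) * (ballVol d / 200 ^ d) by ring,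
      ← Real.rpow_add ht, sub_add_cancel]
  have h3 : (N : ℝ) * (t ^ q * (ballVol d / 200 ^ d)) < 1 := by
    rw [← he]; nlinarith [h2]
  have hc : 0 < t ^ q * (ballVol d / 200 ^ d) := by
    have := Real.rpow_pos_of_pos ht q
    have := ballVol_pos d
    positivity
  have h4 : (N : ℝ) < 1 / (t ^ q * (ballVol d / 200 ^ d)) := (lt_div_iff₀ hc).mpr h3
  have h5 : 1 / (t ^ q * (ballVol d / 200 ^ d)) = (200 ^ d / ballVol d) * t ^ (-q) := by
    rw [Real.rpow_neg ht.le]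
    have h6 : t ^ q ≠ 0 := (Real.rpow_pos_of_pos ht q).ne'
    have h7 : ballVol d ≠ 0 := (ballVol_pos d).ne'
    field_simp
  calc (N : ℝ) ≤ (200 ^ d / ballVol d) * t ^ (-q) := by rw [← h5]; exact h4.le
    _ ≤ Cst d * t ^ (-q) :=
      mul_le_mul_of_nonneg_right (le_max_left _ _) (Real.rpow_nonneg ht.le _)

lemma f_le {d : ℕ} {A : Set (EuclideanSpace ℝ (Fin d))} {q t δ : ℝ} (hq : 0 ≤ q)
    (ht : 0 < t) (ht1 : t < 1)
    (htheta : (coverNum (reachSet A t) t : ℝ) ≤ Cst d * t ^ (-q))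
    (hlog : Real.log (Cst d) / (-Real.log t) ≤ δ) :
    Real.log (coverNum (reachSet A t) t) / (-Real.log t) ≤ q + δ := by
  have hlt : 0 < -Real.log t := by have := Real.log_neg ht ht1; linarith
  have hδ0 : 0 ≤ δ :=
    le_trans (div_nonneg (Real.log_nonneg (one_le_Cst d)) hlt.le) hlog
  set N := coverNum (reachSet A t) t with hN
  rcases Nat.eq_zero_or_pos N with h0 | hpos
  · rw [h0]
    simp only [Nat.cast_zero, Real.log_zero, zero_div]
    linarith
  · have hN1 : (1 : ℝ) ≤ (N : ℝ) := by exact_mod_cast hpos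
    have hlog2 : Real.log N ≤ Real.log (Cst d * t ^ (-q)) :=
      Real.log_le_log (by linarith) htheta
    rw [Real.log_mul (Cst_pos d).ne' (Real.rpow_pos_of_pos ht _).ne',
      Real.log_rpow ht] at hlog2
    have hdiv : Real.log N / (-Real.log t) ≤
        (Real.log (Cst d) + -q * Real.log t) / (-Real.log t) := by gcongr
    have heq : (Real.log (Cst d) + -q * Real.log t) / (-Real.log t) =
        q + Real.log (Cst d) / (-Real.log t) := by
      have hne0 : -Real.log t ≠ 0 := hlt.ne'
      rw [add_div, show (-q * Real.log t) / (-Real.log t) = q by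
        rw [div_eq_iff hne0]; ring, add_comm]
    rw [heq] at hdiv
    linarith

lemma tendsto_logdiv (d : ℕ) :
    Tendsto (fun t : ℝ => Real.log (Cst d) / (-Real.log t)) (𝓝[>] (0:ℝ)) (𝓝 0) := by
  apply Tendsto.div_atTop tendsto_const_nhds
  apply tendsto_neg_atBot_atTop.comp
  exact Real.tendsto_log_nhdsNE_zero.mono_left
    (nhdsWithin_mono _ (fun x hx => ne_of_gt hx))

lemma hIoo : ∀ᶠ t in 𝓝[>] (0:ℝ), t ∈ Ioo (0:ℝ) 1 :=
  Ioo_mem_nhdsGT one_pos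

lemma f_nonneg {d : ℕ} (A : Set (EuclideanSpace ℝ (Fin d))) :
    ∀ᶠ t in 𝓝[>] (0:ℝ),
      0 ≤ Real.log (coverNum (reachSet A t) t) / (-Real.log t) :=
  hIoo.mono fun t ht => div_nonneg (Real.log_natCast_nonneg _)
    (by have := Real.log_neg ht.1 ht.2; linarith)

lemma f_bddge {d : ℕ} (A : Set (EuclideanSpace ℝ (Fin d))) :
    IsBoundedUnder (· ≥ ·) (𝓝[>] (0:ℝ))
      (fun t : ℝ => Real.log (coverNum (reachSet A t) t) / (-Real.log t)) :=
  ⟨0, eventually_map.mpr (f_nonneg A)⟩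

lemma limsup_le_q {d : ℕ} {A : Set (EuclideanSpace ℝ (Fin d))} (hA : IsCompact A)
    (hne : A.Nonempty) {q : ℝ} (hq0 : 0 ≤ q)
    (hql : Filter.limsup (fun ε : ℝ =>
      ENNReal.ofReal (ε ^ (q - (d : ℝ))) * volume (cthickening ε A \ A)) (𝓝[>] 0) = 0) :
    Filter.limsup (fun t : ℝ =>
      Real.log (coverNum (reachSet A t) t) / (-Real.log t)) (𝓝[>] 0) ≤ q := by
  apply le_of_forall_pos_le_add
  intro δ hδ
  have hev1 : ∀ᶠ ε in 𝓝[>] (0:ℝ),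
      ENNReal.ofReal (ε ^ (q - (d : ℝ))) * volume (cthickening ε A \ A) < 1 :=
    eventually_lt_of_limsup_lt (by rw [hql]; exact zero_lt_one)
  have hev3 : ∀ᶠ t in 𝓝[>] (0:ℝ), Real.log (Cst d) / (-Real.log t) ≤ δ :=
    (tendsto_logdiv d).eventually (eventually_le_nhds hδ)
  have hev : ∀ᶠ t in 𝓝[>] (0:ℝ),
      Real.log (coverNum (reachSet A t) t) / (-Real.log t) ≤ q + δ := by
    filter_upwards [hev1, hIoo, hev3] with t h1 h2 h3
    exact f_le hq0 h2.1 h2.2 (theta_le hA hne hq0 h2.1 h1) h3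
  exact limsup_le_of_le (f_bddge A).isCoboundedUnder_le hev

lemma liminf_le_q {d : ℕ} {A : Set (EuclideanSpace ℝ (Fin d))} (hA : IsCompact A)
    (hne : A.Nonempty) {q : ℝ} (hq0 : 0 ≤ q)
    (hql : Filter.liminf (fun ε : ℝ =>
      ENNReal.ofReal (ε ^ (q - (d : ℝ))) * volume (cthickening ε A \ A)) (𝓝[>] 0) = 0) :
    Filter.liminf (fun t : ℝ =>
      Real.log (coverNum (reachSet A t) t) / (-Real.log t)) (𝓝[>] 0) ≤ q := by
  apply le_of_forall_pos_le_add
  intro δ hδ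
  have hev1 : ∃ᶠ ε in 𝓝[>] (0:ℝ),
      ENNReal.ofReal (ε ^ (q - (d : ℝ))) * volume (cthickening ε A \ A) < 1 := by
    by_contra hcon
    rw [not_frequently] at hcon
    have h1 : (1:ℝ≥0∞) ≤ Filter.liminf (fun ε : ℝ =>
        ENNReal.ofReal (ε ^ (q - (d : ℝ))) * volume (cthickening ε A \ A)) (𝓝[>] 0) :=
      le_liminf_of_le (by isBoundedDefault) (hcon.mono fun ε hε => not_lt.mp hε)
    rw [hql] at h1
    exact absurd h1 (by simp)
  have hev3 : ∀ᶠ t in 𝓝[>] (0:ℝ), Real.log (Cst d) / (-Real.log t) ≤ δ :=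
    (tendsto_logdiv d).eventually (eventually_le_nhds hδ)
  have hev : ∃ᶠ t in 𝓝[>] (0:ℝ),
      Real.log (coverNum (reachSet A t) t) / (-Real.log t) ≤ q + δ := by
    apply (hev1.and_eventually (hIoo.and hev3)).mono
    rintro t ⟨h1, h2, h3⟩
    exact f_le hq0 h2.1 h2.2 (theta_le hA hne hq0 h2.1 h1) h3
  exact liminf_le_of_frequently_le hev (f_bddge A)

lemma tendsto_top_exp {d : ℕ} {A : Set (EuclideanSpace ℝ (Fin d))} (hA : IsCompact A) :
    Tendsto (fun ε : ℝ =>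
      ENNReal.ofReal (ε ^ (((d : ℝ) + 1) - (d : ℝ))) * volume (cthickening ε A \ A))
      (𝓝[>] (0:ℝ)) (𝓝 0) := by
  set V := volume (cthickening 1 A) with hV
  have hVtop : V ≠ ⊤ := (hA.cthickening.measure_lt_top).ne
  have hup : Tendsto (fun ε : ℝ => ENNReal.ofReal ε * V) (𝓝[>] (0:ℝ)) (𝓝 0) := by
    have h1 : Tendsto (fun ε : ℝ => ENNReal.ofReal ε) (𝓝[>] (0:ℝ)) (𝓝 0) := by
      have := (ENNReal.continuous_ofReal.tendsto 0).comp
        (tendsto_id.mono_left (nhdsWithin_le_nhds (s := Ioi (0:ℝ))))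
      simpa using this
    have := ENNReal.Tendsto.mul_const h1 (Or.inr hVtop)
    simpa using this
  apply tendsto_of_tendsto_of_tendsto_of_le_of_le' tendsto_const_nhds hup
  · exact Filter.Eventually.of_forall fun ε => zero_le
  · filter_upwards [hIoo] with ε hε
    have hexp : ((d : ℝ) + 1) - (d : ℝ) = 1 := by ring
    rw [hexp, Real.rpow_one]
    exact mul_le_mul' le_rfl (measure_mono (Set.diff_subset.trans (cthickening_mono hε.2.le A)))

/-- the upper (resp. lower) outer box dimension of a nonempty compact set
is at most the upper (resp. lower) outer Minkowski dimension. -/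
theorem outer_box_le_outer_Minkowski (d : ℕ) (A : Set (EuclideanSpace ℝ (Fin d)))
    (hA : IsCompact A) (hne : A.Nonempty) :
    Filter.limsup (fun t : ℝ =>
        Real.log (coverNum (reachSet A t) t) / (-Real.log t)) (𝓝[>] 0) ≤
      dimOutMinkUpper A ∧
    Filter.liminf (fun t : ℝ =>
        Real.log (coverNum (reachSet A t) t) / (-Real.log t)) (𝓝[>] 0) ≤
      dimOutMinkLower A := by
  have hd1 : (0:ℝ) ≤ (d : ℝ) + 1 := by positivity
  constructor
  · rw [dimOutMinkUpper]
    apply le_csInf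
    · exact ⟨(d : ℝ) + 1, hd1, (tendsto_top_exp hA).limsup_eq⟩
    · rintro q ⟨hq0, hql⟩
      exact limsup_le_q hA hne hq0 hql
  · rw [dimOutMinkLower]
    apply le_csInf
    · exact ⟨(d : ℝ) + 1, hd1, (tendsto_top_exp hA).liminf_eq⟩
    · rintro q ⟨hq0, hql⟩
      exact liminf_le_q hA hne hq0 hql
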